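/- Let A be an affine integral domain over a field k equipped with a proper Z-filtration {A_n} that is admissible, and let φ be a non-trivial exponential map on A. Then φ induces a non-trivial exponential map φ̄ on the associated graded ring gr(A) = ⊕_n A_n/A_{n-1} such that ρ(A^φ) ⊆ gr(A)^{φ̄}, where ρ : A → gr(A) sends a ∈ A_n \ A_{n-1} to its class a + A_{n-1}. -/

import Mathlib

open Polynomial

/-- A `k`-algebra homomorphism `φ : A → A[U]` is an *exponential map* if evaluating `U` at `0`
gives the identity and `φ_V φ_U = φ_{V+U}` (comultiplicativity). -/
def IsExponentialMap {k A : Type*} [CommSemiring k] [CommSemiring A] [Algebra k A]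
    (φ : A →ₐ[k] A[X]) : Prop :=
  (∀ a : A, (φ a).eval 0 = a) ∧
  (∀ a : A, (φ a).map (φ : A →+* A[X]) =
      (φ a).eval₂ ((C : A[X] →+* A[X][X]).comp (C : A →+* A[X])) (C X + X))

/-- The ring of invariants `A^φ = {a ∈ A | φ(a) = a}` of a `k`-algebra map `φ : A → A[U]`,
as a subalgebra of `A`. -/
def expInv {k A : Type*} [CommSemiring k] [CommSemiring A] [Algebra k A]
    (φ : A →ₐ[k] A[X]) : Subalgebra k A where
  carrier := {a | φ a = C a}
  mul_mem' := fun {a b} ha hb => by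
    simp only [Set.mem_setOf_eq] at *
    rw [map_mul, ha, hb, ← C_mul]
  add_mem' := fun {a b} ha hb => by
    simp only [Set.mem_setOf_eq] at *
    rw [map_add, ha, hb, ← C_add]
  algebraMap_mem' := fun r => by
    simp only [Set.mem_setOf_eq, AlgHom.commutes, Polynomial.algebraMap_apply]

/-- An exponential map is non-trivial if its ring of invariants is a proper subring. -/
def IsNontrivialExpMap {k A : Type*} [CommSemiring k] [CommSemiring A] [Algebra k A]
    (φ : A →ₐ[k] A[X]) : Prop :=
  IsExponentialMap φ ∧ expInv φ ≠ ⊤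

/-- The Derksen invariant: the `k`-subalgebra of `A` generated by the invariants of all
non-trivial exponential maps on `A`. -/
def DerksenInvariant (k A : Type*) [CommSemiring k] [CommSemiring A] [Algebra k A] :
    Subalgebra k A :=
  Algebra.adjoin k {a : A | ∃ φ : A →ₐ[k] A[X], IsNontrivialExpMap φ ∧ a ∈ expInv φ}

/-- The transcendence degree of a commutative `k`-algebra `A`: the supremum of the
cardinalities of algebraically independent subsets of `A`. -/
noncomputable def trdeg (k A : Type*) [CommRing k] [CommRing A] [Algebra k A] : Cardinal :=
  ⨆ s : {s : Set A // AlgebraicIndependent k ((↑) : s → A)}, Cardinal.mk s.1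

lemma coeff_coeff_eval₂ {R : Type*} [CommRing R] (q : R[X]) (i j : ℕ) :
    (((q.eval₂ ((C : R[X] →+* R[X][X]).comp (C : R →+* R[X])) (C X + X)).coeff i).coeff j)
      = (i + j).choose i • q.coeff (i + j) := by
  induction q using Polynomial.induction_on' with
  | add p q hp hq => simp [hp, hq]
  | monomial m c =>
    rw [eval₂_monomial]
    simp only [RingHom.coe_comp, Function.comp_apply]
    rw [add_pow, Finset.mul_sum, finset_sum_coeff, finset_sum_coeff]
    have key : ∀ t ∈ Finset.range (m+1),
        ((C (C c) * ((C X)^t * X^(m-t) * ((m.choose t : ℕ) : R[X][X]))).coeff i).coeff j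
        = if t = j then (if m - t = i then (m.choose t) • c else 0) else 0 := by
      intro t ht
      have h1 : (C (C c) * ((C X)^t * X^(m-t) * ((m.choose t : ℕ) : R[X][X])))
          = C (C c * X ^ t * ((m.choose t : ℕ) : R[X])) * X ^ (m - t) := by
        rw [C_mul, C_mul, C_eq_natCast, ← C_pow]
        ring
      rw [h1, coeff_C_mul, coeff_X_pow]
      by_cases h2 : i = m - t
      · rw [if_pos h2, mul_one, if_pos h2.symm]
        rw [coeff_mul_natCast, coeff_C_mul, coeff_X_pow]
        by_cases h3 : t = j
        · rw [if_pos (h3 ▸ rfl : j = t), if_pos h3, mul_one, nsmul_eq_mul, mul_comm]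
        · rw [if_neg (fun h : j = t => h3 h.symm), if_neg h3, mul_zero, zero_mul]
      · rw [if_neg h2, mul_zero, coeff_zero]
        by_cases h3 : t = j
        · rw [if_pos h3, if_neg (fun h : m - t = i => h2 h.symm)]
        · rw [if_neg h3]
    rw [Finset.sum_congr rfl key, Finset.sum_ite_eq' (Finset.range (m+1)) j]
    rw [coeff_monomial]
    by_cases hm : m = i + j
    · rw [if_pos (by simp; omega : j ∈ Finset.range (m+1)), if_pos (by omega : m - j = i),
        if_pos hm, hm]
      congr 1
      exact Nat.choose_symm_of_eq_add (Nat.add_comm i j ▸ rfl)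
    · rw [if_neg hm]
      by_cases hj : j ∈ Finset.range (m+1)
      · rw [if_pos hj, if_neg (by simp at hj; omega : ¬ m - j = i), smul_zero]
      · rw [if_neg hj, smul_zero]

theorem expMap_associatedGraded {k A G : Type} [Field k] [CommRing A] [IsDomain A]
    [Algebra k A] [Algebra.FiniteType k A] [CommRing G] [Algebra k G]
    -- a proper `ℤ`-filtration on `A`:
    (F : ℤ → Submodule k A)
    (hmono : ∀ n : ℤ, F n ≤ F (n + 1))
    (hunion : ∀ a : A, ∃ n : ℤ, a ∈ F n)
    (hinter : ∀ a : A, (∀ n : ℤ, a ∈ F n) → a = 0)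
    (hmul : ∀ {n m : ℤ} {a b : A}, a ∈ F n → a ∉ F (n - 1) → b ∈ F m → b ∉ F (m - 1) →
      a * b ∈ F (n + m) ∧ a * b ∉ F (n + m - 1))
    -- admissibility:
    (Γ : Finset A) (hΓ : Algebra.adjoin k (Γ : Set A) = ⊤)
    (hadm : ∀ (n : ℤ), ∀ a ∈ F n,
      a ∈ Submodule.span k ((Submonoid.closure (Γ : Set A) : Set A) ∩ (F n : Set A)))
    -- `G` realizes the associated graded ring `gr(A) = ⊕ₙ Aₙ/Aₙ₋₁`:
    (π : ∀ n : ℤ, F n →ₗ[k] G)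
    (hker : ∀ (n : ℤ) (a : F n), π n a = 0 ↔ (a : A) ∈ F (n - 1))
    (hinternal : DirectSum.IsInternal (fun n : ℤ => LinearMap.range (π n)))
    (hone : ∀ h1 : (1 : A) ∈ F 0, π 0 ⟨1, h1⟩ = 1)
    (hmulcomp : ∀ (n m : ℤ) (a : F n) (b : F m) (hab : (a : A) * (b : A) ∈ F (n + m)),
      π (n + m) ⟨(a : A) * (b : A), hab⟩ = π n a * π m b)
    -- a non-trivial exponential map on `A`:
    (φ : A →ₐ[k] A[X]) (hφ  : IsExponentialMap φ) (hnt : expInv φ ≠ ⊤) :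
    ∃ ψ : G →ₐ[k] Polynomial G, IsExponentialMap ψ ∧ expInv ψ ≠ ⊤ ∧
      ∀ (a : A) (n : ℤ) (h : a ∈ F n), a ∉ F (n - 1) → a ∈ expInv φ →
        π n ⟨a, h⟩ ∈ expInv ψ := by
  classical
  -- ## monotonicity of the filtration
  have hmono' : ∀ {m n : ℤ}, m ≤ n → F m ≤ F n := by
    intro m n h
    exact Int.le_induction (motive := fun n _ => F m ≤ F n) le_rfl
      (fun n _ ih => ih.trans (hmono n)) n h
  -- ## the degree function
  have hdeg_ex : ∀ a : A, ∃ n : ℤ, a ≠ 0 → a ∈ F n ∧ a ∉ F (n - 1) := by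
    intro a
    by_cases ha : a = 0
    · exact ⟨0, fun h => absurd ha h⟩
    · obtain ⟨n₀, hn₀⟩ := hunion a
      have hm : ∃ m : ℤ, a ∉ F m := by
        by_contra h
        push_neg at h
        exact ha (hinter a h)
      obtain ⟨m, hm⟩ := hm
      have hP : ∃ j : ℕ, a ∉ F (n₀ - (j : ℤ)) := by
        refine ⟨(n₀ - m).toNat, fun hmem => hm (hmono' ?_ hmem)⟩
        omega
      have hN0 : Nat.find hP ≠ 0 := by
        intro h0
        have := Nat.find_spec hP
        rw [h0] at this
        exact this (by simpa using hn₀)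
      refine ⟨n₀ - (Nat.find hP : ℤ) + 1, fun _ => ⟨?_, ?_⟩⟩
      · have := Nat.find_min hP (m := Nat.find hP - 1) (by omega)
        rw [not_not] at this
        have harith : n₀ - ((Nat.find hP - 1 : ℕ) : ℤ) = n₀ - (Nat.find hP : ℤ) + 1 := by
          have : (1:ℕ) ≤ Nat.find hP := by omega
          push_cast [Nat.cast_sub this]
          ring
        rwa [harith] at this
      · have := Nat.find_spec hP
        have harith : n₀ - (Nat.find hP : ℤ) + 1 - 1 = n₀ - (Nat.find hP : ℤ) := by ring
        rwa [harith]
  choose dg hdg using hdeg_ex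
  have hdgu : ∀ {a : A} {n : ℤ}, a ∈ F n → a ∉ F (n - 1) → n = dg a := by
    intro a n h1 h2
    have ha : a ≠ 0 := by rintro rfl; exact h2 (zero_mem _)
    by_contra hne
    rcases lt_or_gt_of_ne hne with h | h
    · exact (hdg a ha).2 (hmono' (by omega) h1)
    · exact h2 (hmono' (by omega) (hdg a ha).1)
  have hmemF : ∀ {a : A} {n : ℤ}, a ≠ 0 → (a ∈ F n ↔ dg a ≤ n) := by
    intro a n ha
    constructor
    · intro h
      by_contra hlt
      exact (hdg a ha).2 (hmono' (by omega) h)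
    · intro h
      exact hmono' h (hdg a ha).1
  have hdg_mul : ∀ {a b : A}, a ≠ 0 → b ≠ 0 → dg (a * b) = dg a + dg b := by
    intro a b ha hb
    have h := hmul (hdg a ha).1 (hdg a ha).2 (hdg b hb).1 (hdg b hb).2
    exact (hdgu h.1 h.2).symm
  have hFmul : ∀ {n m : ℤ} {a b : A}, a ∈ F n → b ∈ F m → a * b ∈ F (n + m) := by
    intro n m a b ha hb
    by_cases ha0 : a = 0
    · rw [ha0, zero_mul]; exact zero_mem _
    by_cases hb0 : b = 0
    · rw [hb0, mul_zero]; exact zero_mem _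
    have hab0 : a * b ≠ 0 := mul_ne_zero ha0 hb0
    rw [hmemF hab0, hdg_mul ha0 hb0]
    exact add_le_add ((hmemF ha0).1 ha) ((hmemF hb0).1 hb)
  have h1F : (1 : A) ∈ F 0 ∧ (1 : A) ∉ F (-1) := by
    have h1 : (1 : A) ≠ 0 := one_ne_zero
    have hd : dg (1 : A) = 0 := by
      have := hdg_mul h1 h1
      rw [one_mul] at this
      omega
    have := hdg 1 h1
    rw [hd] at this
    exact ⟨this.1, by simpa using this.2⟩
  -- ## the graded projection, as a total function
  let p : ℤ → A → G := fun m x => if h : x ∈ F m then π m ⟨x, h⟩ else 0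
  have hp_mem : ∀ {m : ℤ} {x : A} (h : x ∈ F m), p m x = π m ⟨x, h⟩ := by
    intro m x h; exact dif_pos h
  have hp_zero : ∀ m : ℤ, p m 0 = 0 := by
    intro m
    rw [hp_mem (zero_mem _)]
    exact map_zero _
  have hp_lower : ∀ {m : ℤ} {x : A}, x ∈ F (m - 1) → p m x = 0 := by
    intro m x h
    have hx : x ∈ F m := hmono' (by omega) h
    rw [hp_mem hx]
    exact (hker m ⟨x, hx⟩).2 h
  have hp_ne : ∀ {m : ℤ} {x : A}, x ∈ F m → x ∉ F (m - 1) → p m x ≠ 0 := by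
    intro m x h h'
    rw [hp_mem h]
    exact fun h0 => h' ((hker m ⟨x, h⟩).1 h0)
  have hp_add : ∀ {m : ℤ} {x y : A}, x ∈ F m → y ∈ F m → p m (x + y) = p m x + p m y := by
    intro m x y hx hy
    rw [hp_mem hx, hp_mem hy, hp_mem (add_mem hx hy),
      show (⟨x + y, add_mem hx hy⟩ : F m) = ⟨x, hx⟩ + ⟨y, hy⟩ from rfl, map_add]
  have hp_smul : ∀ {m : ℤ} (c : k) {x : A}, x ∈ F m → p m (c • x) = c • p m x := by
    intro m c x hx
    rw [hp_mem hx, hp_mem (Submodule.smul_mem _ c hx),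
      show (⟨c • x, Submodule.smul_mem _ c hx⟩ : F m) = c • ⟨x, hx⟩ from rfl, map_smul]
  have hp_nsmul : ∀ {m : ℤ} (c : ℕ) {x : A}, x ∈ F m → p m (c • x) = c • p m x := by
    intro m c x hx
    rw [hp_mem hx, hp_mem (Submodule.smul_of_tower_mem _ c hx),
      show (⟨c • x, Submodule.smul_of_tower_mem _ c hx⟩ : F m) = c • ⟨x, hx⟩ from rfl]
    exact map_nsmul (π m).toAddMonoidHom c _
  have hp_sum : ∀ {m : ℤ} {ι : Type} (s : Finset ι) (f : ι → A), (∀ i ∈ s, f i ∈ F m) →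
      p m (∑ i ∈ s, f i) = ∑ i ∈ s, p m (f i) := by
    intro m ι s
    induction s using Finset.cons_induction with
    | empty => intro f _; simpa using hp_zero m
    | cons a s ha ih =>
      intro f hf
      rw [Finset.sum_cons, Finset.sum_cons,
        hp_add (hf a (Finset.mem_cons_self a s))
          (Submodule.sum_mem _ fun i hi => hf i (Finset.mem_cons_of_mem hi)),
        ih f fun i hi => hf i (Finset.mem_cons_of_mem hi)]
  have hp_mul : ∀ {n m : ℤ} {x y : A}, x ∈ F n → y ∈ F m →
      p (n + m) (x * y) = p n x * p m y := by
    intro n m x y hx hy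
    by_cases hx' : x ∈ F (n - 1)
    · rw [hp_lower hx', zero_mul, hp_lower
        (show x * y ∈ F (n + m - 1) from by
          have := hFmul hx' hy
          rwa [show n - 1 + m = n + m - 1 by ring] at this)]
    by_cases hy' : y ∈ F (m - 1)
    · rw [hp_lower hy', mul_zero, hp_lower
        (show x * y ∈ F (n + m - 1) from by
          have := hFmul hx hy'
          rwa [show n + (m - 1) = n + m - 1 by ring] at this)]
    rw [hp_mem hx, hp_mem hy, hp_mem (hFmul hx hy)]
    exact hmulcomp n m ⟨x, hx⟩ ⟨y, hy⟩ (hFmul hx hy)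
  have hp_one : p 0 1 = 1 := by rw [hp_mem h1F.1]; exact hone h1F.1
  -- ## the slope `e`
  have hcoeff0 : ∀ a : A, (φ a).coeff 0 = a := by
    intro a
    rw [coeff_zero_eq_eval_zero]
    exact hφ.1 a
  have hΓnt : ∃ γ ∈ Γ, φ γ ≠ C γ := by
    by_contra h
    push_neg at h
    apply hnt
    rw [eq_top_iff, ← hΓ]
    exact Algebra.adjoin_le fun x hx => h x hx
  obtain ⟨γ₀, hγ₀Γ, hγ₀⟩ := hΓnt
  have hγ₀i : ∃ i : ℕ, i ≠ 0 ∧ (φ γ₀).coeff i ≠ 0 := by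
    by_contra h
    push_neg at h
    apply hγ₀
    ext i
    rcases Nat.eq_zero_or_pos i with hi | hi
    · rw [hi, hcoeff0, coeff_C_zero]
    · rw [h i (by omega), coeff_C, if_neg (by omega)]
  obtain ⟨i₀, hi₀, hc₀⟩ := hγ₀i
  let s : Finset ℚ := Γ.biUnion fun γ => ((φ γ).support.filter (fun i => i ≠ 0)).image
    (fun i => ((dg ((φ γ).coeff i) : ℚ) - (dg γ : ℚ)) / (i : ℚ))
  have hs_ne : s.Nonempty := by
    refine ⟨_, Finset.mem_biUnion.2 ⟨γ₀, hγ₀Γ, Finset.mem_image.2 ⟨i₀, ?_, rfl⟩⟩⟩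
    exact Finset.mem_filter.2 ⟨mem_support_iff.2 hc₀, hi₀⟩
  let e : ℚ := s.max' hs_ne
  have he_ge : ∀ γ ∈ Γ, ∀ i : ℕ, i ≠ 0 → (φ γ).coeff i ≠ 0 →
      (dg ((φ γ).coeff i) : ℚ) ≤ (dg γ : ℚ) + e * (i : ℚ) := by
    intro γ hγ i hi hc
    have hmem : ((dg ((φ γ).coeff i) : ℚ) - (dg γ : ℚ)) / (i : ℚ) ∈ s :=
      Finset.mem_biUnion.2 ⟨γ, hγ, Finset.mem_image.2
        ⟨i, Finset.mem_filter.2 ⟨mem_support_iff.2 hc, hi⟩, rfl⟩⟩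
    have hle := s.le_max' _ hmem
    have hipos : (0 : ℚ) < (i : ℚ) := by exact_mod_cast Nat.pos_of_ne_zero hi
    rw [div_le_iff₀ hipos] at hle
    nlinarith
  have he_attain : ∃ γ ∈ Γ, γ ≠ 0 ∧ ∃ i : ℕ, i ≠ 0 ∧ (φ γ).coeff i ≠ 0 ∧
      (dg ((φ γ).coeff i) : ℚ) = (dg γ : ℚ) + e * (i : ℚ) := by
    have hmem := s.max'_mem hs_ne
    obtain ⟨γ, hγ, hmem⟩ := Finset.mem_biUnion.1 hmem
    obtain ⟨i, hi, heq⟩ := Finset.mem_image.1 hmem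
    obtain ⟨hisupp, hine⟩ := Finset.mem_filter.1 hi
    have hc : (φ γ).coeff i ≠ 0 := mem_support_iff.1 hisupp
    have hγ0 : γ ≠ 0 := by
      intro h0
      rw [h0, map_zero] at hc
      simp at hc
    refine ⟨γ, hγ, hγ0, i, hine, hc, ?_⟩
    have hipos : (0 : ℚ) < (i : ℚ) := by exact_mod_cast Nat.pos_of_ne_zero hine
    have : e = ((dg ((φ γ).coeff i) : ℚ) - (dg γ : ℚ)) / (i : ℚ) := heq.symm
    rw [this]
    field_simp
    ring
  -- ## floor / denominator helpers
  have hfloor_le : ∀ x y : ℚ, ⌊x⌋ + ⌊y⌋ ≤ ⌊x + y⌋ := by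
    intro x y
    refine Int.le_floor.2 ?_
    push_cast
    exact add_le_add (Int.floor_le x) (Int.floor_le y)
  have hfloor_lt : ∀ x y : ℚ, (¬ ∃ z : ℤ, x = (z : ℚ)) → (∃ z : ℤ, x + y = (z : ℚ)) →
      ⌊x⌋ + ⌊y⌋ ≤ ⌊x + y⌋ - 1 := by
    intro x y hx hxy
    obtain ⟨z, hz⟩ := hxy
    have h1 : ((⌊x⌋ : ℚ)) ≠ x := fun h => hx ⟨⌊x⌋, h.symm⟩
    have h2 : ((⌊x⌋ : ℚ)) < x := lt_of_le_of_ne (Int.floor_le x) h1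
    have h3 : ((⌊y⌋ : ℚ)) ≤ y := Int.floor_le y
    have h6 : ⌊x + y⌋ = z := by rw [hz, Int.floor_intCast]
    have h4 : ((⌊x⌋ + ⌊y⌋ : ℤ) : ℚ) < (z : ℚ) := by rw [← hz]; push_cast; linarith
    have : (⌊x⌋ + ⌊y⌋ : ℤ) < z := by exact_mod_cast h4
    omega
  -- ## the key degree bound
  have hQ : ∀ (n : ℤ) (a : A), a ∈ F n → ∀ i : ℕ, (φ a).coeff i ∈ F ⌊(n : ℚ) + e * (i : ℚ)⌋ := by
    have hW : ∀ w ∈ Submonoid.closure (Γ : Set A), ∀ m : ℤ, w ∈ F m → ∀ i : ℕ,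
        (φ w).coeff i ∈ F ⌊(m : ℚ) + e * (i : ℚ)⌋ := by
      intro w hw
      induction hw using Submonoid.closure_induction with
      | mem γ hγ =>
        intro m hm i
        by_cases hγ0 : γ = 0
        · rw [hγ0, map_zero, coeff_zero]; exact zero_mem _
        by_cases hc : (φ γ).coeff i = 0
        · rw [hc]; exact zero_mem _
        rcases Nat.eq_zero_or_pos i with hi | hi
        · rw [hi]
          rw [hcoeff0]
          have : ⌊(m : ℚ) + e * ((0:ℕ) : ℚ)⌋ = m := by
            push_cast
            simp
          rw [this]
          exact hm
        · have hb := he_ge γ hγ i (by omega) hc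
          rw [hmemF hc, Int.le_floor]
          calc ((dg ((φ γ).coeff i) : ℚ)) ≤ (dg γ : ℚ) + e * (i : ℚ) := hb
            _ ≤ (m : ℚ) + e * (i : ℚ) := by
              have : (dg γ : ℚ) ≤ (m : ℚ) := by exact_mod_cast (hmemF hγ0).1 hm
              linarith
      | one =>
        intro m hm i
        have hm0 : (0 : ℤ) ≤ m := by
          by_contra h
          exact h1F.2 (hmono' (by omega) hm)
        rw [map_one]
        rcases Nat.eq_zero_or_pos i with hi | hi
        · rw [hi, coeff_one, if_pos rfl]
          refine hmono' ?_ h1F.1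
          rw [Int.le_floor]
          push_cast
          simp
          exact_mod_cast hm0
        · rw [coeff_one, if_neg (by omega)]
          exact zero_mem _
      | mul x y hxc hyc ihx ihy =>
        intro m hm i
        by_cases hx0 : x = 0
        · rw [hx0, zero_mul, map_zero, coeff_zero]; exact zero_mem _
        by_cases hy0 : y = 0
        · rw [hy0, mul_zero, map_zero, coeff_zero]; exact zero_mem _
        have hxy0 : x * y ≠ 0 := mul_ne_zero hx0 hy0
        have hdgs : dg x + dg y ≤ m := by
          rw [← hdg_mul hx0 hy0]
          exact (hmemF hxy0).1 hm
        rw [map_mul, coeff_mul]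
        refine Submodule.sum_mem _ ?_
        rintro ⟨j, l⟩ hjl
        have hjli : j + l = i := Finset.HasAntidiagonal.mem_antidiagonal.1 hjl
        have h1 := ihx (dg x) (hdg x hx0).1 j
        have h2 := ihy (dg y) (hdg y hy0).1 l
        have h3 := hFmul h1 h2
        refine hmono' ?_ h3
        calc ⌊(dg x : ℚ) + e * (j : ℚ)⌋ + ⌊(dg y : ℚ) + e * (l : ℚ)⌋
            ≤ ⌊((dg x : ℚ) + e * (j : ℚ)) + ((dg y : ℚ) + e * (l : ℚ))⌋ := hfloor_le _ _
          _ = ⌊((dg x + dg y : ℤ) : ℚ) + e * (i : ℚ)⌋ := by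
              congr 1
              push_cast [← hjli]
              ring
          _ ≤ ⌊(m : ℚ) + e * (i : ℚ)⌋ := by
              refine Int.floor_le_floor ?_
              have : ((dg x + dg y : ℤ) : ℚ) ≤ (m : ℚ) := by exact_mod_cast hdgs
              linarith
    intro n a ha i
    revert i
    refine Submodule.span_induction
      (p := fun x _ => ∀ i : ℕ, (φ x).coeff i ∈ F ⌊(n : ℚ) + e * (i : ℚ)⌋)
      ?_ ?_ ?_ ?_ (hadm n a ha)
    · rintro x ⟨hx1, hx2⟩ i
      exact hW x hx1 n hx2 i
    · intro i
      rw [map_zero, coeff_zero]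
      exact zero_mem _
    · intro x y _ _ hx hy i
      rw [map_add, coeff_add]
      exact add_mem (hx i) (hy i)
    · intro c x _ hx i
      rw [map_smul, coeff_smul]
      exact Submodule.smul_mem _ c (hx i)
  -- ## integrality bookkeeping
  let ok : ℕ → Prop := fun i => ∃ z : ℤ, (e * (i : ℚ)) = (z : ℚ)
  let E : ℕ → ℤ := fun i => ⌊e * (i : ℚ)⌋
  have hokE : ∀ i : ℕ, ok i → ((E i : ℚ)) = e * (i : ℚ) := by
    rintro i ⟨z, hz⟩
    show ((⌊e * (i : ℚ)⌋ : ℚ)) = e * (i : ℚ)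
    rw [hz, Int.floor_intCast]
  have hok0 : ok 0 := ⟨0, by push_cast; ring⟩
  have hE0 : E 0 = 0 := by
    show ⌊e * ((0 : ℕ) : ℚ)⌋ = 0
    push_cast
    simp
  have hok_add : ∀ i j : ℕ, ok i → ok j → ok (i + j) ∧ E (i + j) = E i + E j := by
    rintro i j ⟨z, hz⟩ ⟨w, hw⟩
    have hsum : e * ((i + j : ℕ) : ℚ) = ((z + w : ℤ) : ℚ) := by
      push_cast
      rw [mul_add, hz, hw]
    refine ⟨⟨z + w, hsum⟩, ?_⟩
    show ⌊e * ((i + j : ℕ) : ℚ)⌋ = ⌊e * (i : ℚ)⌋ + ⌊e * (j : ℚ)⌋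
    rw [hsum, hz, hw, Int.floor_intCast, Int.floor_intCast, Int.floor_intCast]
  have hok_sub : ∀ i j : ℕ, ok i → ok (i + j) → ok j := by
    rintro i j ⟨z, hz⟩ ⟨w, hw⟩
    refine ⟨w - z, ?_⟩
    push_cast at hw ⊢
    rw [mul_add] at hw
    rw [← hw, hz]
    ring
  have hfloorE : ∀ (n : ℤ) (i : ℕ), ok i → ⌊(n : ℚ) + e * (i : ℚ)⌋ = n + E i := by
    intro n i h
    rw [← hokE i h, ← Int.cast_add, Int.floor_intCast]
  have hQ' : ∀ {n : ℤ} {a : A} {i : ℕ}, a ∈ F n → ok i → (φ a).coeff i ∈ F (n + E i) := by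
    intro n a i ha h
    have := hQ n a ha i
    rwa [hfloorE n i h] at this
  -- ## the induced map on graded pieces
  let t : ℤ → A → ℕ → G := fun n a i => if ok i then p (n + E i) ((φ a).coeff i) else 0
  let L : ℤ → A → G[X] := fun n a => ∑ i ∈ (φ a).support, C (t n a i) * X ^ i
  have ht_zero : ∀ (n : ℤ) (a : A) (i : ℕ), (φ a).coeff i = 0 → t n a i = 0 := by
    intro n a i hc
    show (if ok i then p (n + E i) ((φ a).coeff i) else 0) = 0
    rw [hc]
    split
    · exact hp_zero _
    · rfl
  have ht_ok : ∀ (n : ℤ) (a : A) (i : ℕ), ok i → t n a i = p (n + E i) ((φ a).coeff i) := by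
    intro n a i h
    exact if_pos h
  have ht_nok : ∀ (n : ℤ) (a : A) (i : ℕ), ¬ ok i → t n a i = 0 := by
    intro n a i h
    exact if_neg h
  have hL_coeff : ∀ (n : ℤ) (a : A) (i : ℕ), (L n a).coeff i = t n a i := by
    intro n a i
    show (∑ b ∈ (φ a).support, C (t n a b) * X ^ b).coeff i = t n a i
    rw [finset_sum_coeff,
      Finset.sum_congr rfl (fun b _ => by rw [coeff_C_mul, coeff_X_pow])]
    simp only [mul_ite, mul_one, mul_zero]
    rw [Finset.sum_ite_eq (φ a).support i (fun b => t n a b)]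
    split
    · rfl
    · next h => exact (ht_zero n a i (notMem_support_iff.1 h)).symm
  have hL_add : ∀ {n : ℤ} {a b : A}, a ∈ F n → b ∈ F n → L n (a + b) = L n a + L n b := by
    intro n a b ha hb
    ext i
    rw [coeff_add, hL_coeff, hL_coeff, hL_coeff]
    by_cases h : ok i
    · rw [ht_ok n _ i h, ht_ok n a i h, ht_ok n b i h, map_add, coeff_add]
      exact hp_add (hQ' ha h) (hQ' hb h)
    · rw [ht_nok n _ i h, ht_nok n a i h, ht_nok n b i h, add_zero]
  have hL_smul : ∀ {n : ℤ} (c : k) {a : A}, a ∈ F n → L n (c • a) = c • L n a := by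
    intro n c a ha
    ext i
    rw [coeff_smul, hL_coeff, hL_coeff]
    by_cases h : ok i
    · rw [ht_ok n _ i h, ht_ok n a i h, map_smul, coeff_smul]
      exact hp_smul c (hQ' ha h)
    · rw [ht_nok n _ i h, ht_nok n a i h, smul_zero]
  have hL_lower : ∀ {n : ℤ} {a : A}, a ∈ F (n - 1) → L n a = 0 := by
    intro n a ha
    ext i
    rw [hL_coeff, coeff_zero]
    by_cases h : ok i
    · rw [ht_ok n a i h]
      refine hp_lower ?_
      have := hQ' ha h
      rwa [show n - 1 + E i = n + E i - 1 by ring] at this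
    · exact ht_nok n a i h
  -- ## assembling the algebra map on `G`
  let Lmap : ∀ n : ℤ, F n →ₗ[k] G[X] := fun n =>
    { toFun := fun a => L n a.1
      map_add' := fun a b => hL_add a.2 b.2
      map_smul' := fun c a => hL_smul c a.2 }
  have hLmap_ker : ∀ n : ℤ, LinearMap.ker (π n) ≤ LinearMap.ker (Lmap n) := by
    intro n a ha
    have h1 : (a : A) ∈ F (n - 1) := (hker n a).1 ha
    exact hL_lower h1
  let Mn : ∀ n : ℤ, (LinearMap.range (π n) : Submodule k G) →ₗ[k] G[X] := fun n =>
    (Submodule.liftQ (LinearMap.ker (π n)) (Lmap n) (hLmap_ker n)) ∘ₗ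
      ((π n).quotKerEquivRange.symm : LinearMap.range (π n) →ₗ[k] _)
  have hMn : ∀ (n : ℤ) (a : F n), Mn n ⟨π n a, LinearMap.mem_range_self _ a⟩ = L n a.1 := by
    intro n a
    have h1 : (π n).quotKerEquivRange (Submodule.Quotient.mk a)
        = ⟨π n a, LinearMap.mem_range_self _ a⟩ :=
      Subtype.ext ((π n).quotKerEquivRange_apply_mk a)
    show (Submodule.liftQ (LinearMap.ker (π n)) (Lmap n) (hLmap_ker n))
      ((π n).quotKerEquivRange.symm ⟨π n a, LinearMap.mem_range_self _ a⟩) = L n a.1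
    rw [← h1, LinearEquiv.symm_apply_apply, Submodule.liftQ_apply]
    rfl
  let ψ₀ : G →ₗ[k] G[X] :=
    (DirectSum.toModule k ℤ G[X] Mn) ∘ₗ
      ((LinearEquiv.ofBijective (DirectSum.coeLinearMap (fun n : ℤ => LinearMap.range (π n)))
        hinternal).symm : G →ₗ[k] _)
  have hψ₀ : ∀ (n : ℤ) (a : F n), ψ₀ (π n a) = L n a.1 := by
    intro n a
    have h1 : (LinearEquiv.ofBijective
          (DirectSum.coeLinearMap (fun n : ℤ => LinearMap.range (π n))) hinternal).symm (π n a)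
        = DirectSum.lof k ℤ (fun n : ℤ => LinearMap.range (π n)) n
            ⟨π n a, LinearMap.mem_range_self _ a⟩ := by
      rw [LinearEquiv.symm_apply_eq, DirectSum.lof_eq_of]
      exact (DirectSum.coeLinearMap_of (fun n : ℤ => LinearMap.range (π n)) n
        ⟨π n a, LinearMap.mem_range_self _ a⟩).symm
    show (DirectSum.toModule k ℤ G[X] Mn)
      ((LinearEquiv.ofBijective (DirectSum.coeLinearMap (fun n : ℤ => LinearMap.range (π n)))
        hinternal).symm (π n a)) = L n a.1
    rw [h1, DirectSum.toModule_lof, hMn]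
  have hspan : ∀ (P : G → Prop), P 0 → (∀ u v : G, P u → P v → P (u + v)) →
      (∀ (n : ℤ) (a : F n), P (π n a)) → ∀ x : G, P x := by
    intro P h0 hadd hmem x
    have hx : x ∈ ⨆ n : ℤ, LinearMap.range (π n) := by
      rw [hinternal.submodule_iSup_eq_top]
      trivial
    refine Submodule.iSup_induction (motive := P) _ hx ?_ h0 hadd
    rintro n y ⟨a, rfl⟩
    exact hmem n a
  -- ## multiplicativity
  have hLmul : ∀ (n m : ℤ) (a b : A), a ∈ F n → b ∈ F m →
      L (n + m) (a * b) = L n a * L m b := by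
    intro n m a b ha hb
    ext i
    rw [hL_coeff, coeff_mul]
    have key0 : ∀ (n' m' : ℤ) (u v : A), u ∈ F n' → v ∈ F m' → ∀ (j l : ℕ), j + l = i →
        ¬ ok j → ok i → p (n' + m' + E i) ((φ u).coeff j * (φ v).coeff l) = 0 := by
      intro n' m' u v hu hv j l hjl hj hi
      have h1 := hQ n' u hu j
      have h2 := hQ m' v hv l
      have h3 := hFmul h1 h2
      refine hp_lower (hmono' ?_ h3)
      have h4 : (¬ ∃ z : ℤ, ((n' : ℚ) + e * (j : ℚ)) = (z : ℚ)) := by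
        rintro ⟨z, hz⟩
        exact hj ⟨z - n', by push_cast; linarith⟩
      have h5 : ((n' : ℚ) + e * (j : ℚ)) + ((m' : ℚ) + e * (l : ℚ))
          = ((n' + m' + E i : ℤ) : ℚ) := by
        push_cast
        rw [hokE i hi]
        push_cast [← hjl]
        ring
      have h6 := hfloor_lt _ _ h4 ⟨n' + m' + E i, h5⟩
      rw [h5, Int.floor_intCast] at h6
      omega
    by_cases hi : ok i
    · rw [ht_ok _ _ i hi, map_mul, coeff_mul, hp_sum _ _ ?memb]
      case memb =>
        rintro ⟨j, l⟩ hx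
        have hjl : j + l = i := Finset.HasAntidiagonal.mem_antidiagonal.1 hx
        have h1 := hQ n a ha j
        have h2 := hQ m b hb l
        have h3 := hFmul h1 h2
        refine hmono' ?_ h3
        calc ⌊(n : ℚ) + e * (j : ℚ)⌋ + ⌊(m : ℚ) + e * (l : ℚ)⌋
            ≤ ⌊((n : ℚ) + e * (j : ℚ)) + ((m : ℚ) + e * (l : ℚ))⌋ := hfloor_le _ _
          _ = n + m + E i := by
              rw [show ((n : ℚ) + e * (j : ℚ)) + ((m : ℚ) + e * (l : ℚ))
                  = ((n + m : ℤ) : ℚ) + e * (i : ℚ) by push_cast [← hjl]; ring,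
                hfloorE (n + m) i hi]
      refine Finset.sum_congr rfl ?_
      rintro ⟨j, l⟩ hx
      have hjl : j + l = i := Finset.HasAntidiagonal.mem_antidiagonal.1 hx
      rw [hL_coeff, hL_coeff]
      by_cases hj : ok j
      · by_cases hl : ok l
        · rw [ht_ok n a j hj, ht_ok m b l hl, ← hp_mul (hQ' ha hj) (hQ' hb hl),
            show n + E j + (m + E l) = n + m + E i by
              rw [← hjl, (hok_add j l hj hl).2]; ring]
        · rw [ht_nok m b l hl, mul_zero,
            show (φ a).coeff j * (φ b).coeff l = (φ b).coeff l * (φ a).coeff j from mul_comm _ _,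
            show n + m + E i = m + n + E i by ring]
          exact key0 m n b a hb ha l j (by omega) hl hi
      · rw [ht_nok n a j hj, zero_mul]
        exact key0 n m a b ha hb j l hjl hj hi
    · rw [ht_nok _ _ i hi]
      symm
      refine Finset.sum_eq_zero ?_
      rintro ⟨j, l⟩ hx
      have hjl : j + l = i := Finset.HasAntidiagonal.mem_antidiagonal.1 hx
      rw [hL_coeff, hL_coeff]
      by_cases hj : ok j
      · have hl : ¬ ok l := fun hl => hi (hjl ▸ (hok_add j l hj hl).1)
        rw [ht_nok m b l hl, mul_zero]
      · rw [ht_nok n a j hj, zero_mul]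
  have hψ₀_mul : ∀ x y : G, ψ₀ (x * y) = ψ₀ x * ψ₀ y := by
    refine hspan (fun x => ∀ y : G, ψ₀ (x * y) = ψ₀ x * ψ₀ y) ?_ ?_ ?_
    · intro y
      simp only [zero_mul, map_zero]
    · intro u v hu hv y
      rw [add_mul, map_add, map_add, hu y, hv y, add_mul]
    · intro n a
      refine hspan (fun y => ψ₀ (π n a * y) = ψ₀ (π n a) * ψ₀ y) ?_ ?_ ?_
      · simp only [mul_zero, map_zero]
      · intro u v hu hv
        rw [mul_add, map_add, map_add, hu, hv, mul_add]
      · intro m b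
        rw [← hmulcomp n m a b (hFmul a.2 b.2), hψ₀, hψ₀, hψ₀]
        exact hLmul n m a b a.2 b.2
  have hψ₀_one : ψ₀ (1 : G) = 1 := by
    rw [← hone h1F.1, hψ₀]
    ext i
    rw [hL_coeff, coeff_one]
    rcases Nat.eq_zero_or_pos i with hi | hi
    · subst hi
      rw [if_pos rfl, ht_ok 0 1 0 hok0, hE0, map_one, coeff_one, if_pos rfl]
      rw [show (0 : ℤ) + 0 = 0 by ring]
      exact hp_one
    · rw [if_neg (by omega), ht_zero 0 1 i (by rw [map_one, coeff_one, if_neg (by omega)])]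
  let ψ : G →ₐ[k] G[X] := AlgHom.ofLinearMap ψ₀ hψ₀_one hψ₀_mul
  have hψ_apply : ∀ g : G, ψ g = ψ₀ g := fun g => rfl
  -- ## lemma B : the coefficient identity for `ψ` on graded pieces
  have hB0 : ∀ (a : A) (i j : ℕ), (φ ((φ a).coeff i)).coeff j
      = (i + j).choose i • (φ a).coeff (i + j) := by
    intro a i j
    have h := congrArg (fun q => (q.coeff i).coeff j) (hφ.2 a)
    simpa only [coeff_map, coeff_coeff_eval₂, RingHom.coe_coe, AlgHom.coe_toRingHom] using h
  have hB : ∀ (n : ℤ) (a : A), a ∈ F n → ∀ i j : ℕ,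
      (ψ₀ (t n a i)).coeff j = (i + j).choose i • t n a (i + j) := by
    intro n a ha i j
    by_cases hi : ok i
    · have hc : (φ a).coeff i ∈ F (n + E i) := hQ' ha hi
      rw [ht_ok n a i hi, hp_mem hc, hψ₀ (n + E i) ⟨_, hc⟩, hL_coeff]
      by_cases hj : ok j
      · have hokij := hok_add i j hi hj
        rw [ht_ok _ _ j hj, hB0 a i j, ht_ok n a (i + j) hokij.1,
          show n + E i + E j = n + E (i + j) by rw [hokij.2]; ring]
        exact hp_nsmul _ (hQ' ha hokij.1)
      · rw [ht_nok _ _ j hj, ht_nok n a (i + j) (fun h => hj (hok_sub i j hi h)), smul_zero]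
    · rw [ht_nok n a i hi, map_zero, coeff_zero]
      by_cases hij : ok (i + j)
      · symm
        rw [ht_ok n a (i + j) hij, ← hp_nsmul _ (hQ' ha hij), ← hB0 a i j]
        refine hp_lower (hmono' ?_ (hQ ⌊(n : ℚ) + e * (i : ℚ)⌋ _ (hQ n a ha i) j))
        have h4 : (¬ ∃ z : ℤ, ((n : ℚ) + e * (i : ℚ)) = (z : ℚ)) := by
          rintro ⟨z, hz⟩
          exact hi ⟨z - n, by push_cast; linarith⟩
        have h5 : ((n : ℚ) + e * (i : ℚ)) + e * (j : ℚ) = ((n + E (i + j) : ℤ) : ℚ) := by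
          push_cast
          rw [hokE _ hij]
          push_cast
          ring
        have h6 := hfloor_lt _ _ h4 ⟨n + E (i + j), h5⟩
        rw [h5, Int.floor_intCast] at h6
        rw [Int.floor_intCast_add]
        omega
      · rw [ht_nok n a (i + j) hij, smul_zero]
  refine ⟨ψ, ⟨?_, ?_⟩, ?_, ?_⟩
  · -- evaluation at 0 is the identity
    refine hspan (fun g => (ψ g).eval 0 = g) ?_ ?_ ?_
    · show (ψ 0).eval 0 = 0
      rw [hψ_apply, map_zero, eval_zero]
    · intro u v hu hv
      show (ψ (u + v)).eval 0 = u + v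
      rw [map_add, eval_add, hu, hv]
    · intro n a
      show (ψ (π n a)).eval 0 = π n a
      rw [hψ_apply, hψ₀, ← coeff_zero_eq_eval_zero, hL_coeff, ht_ok n a.1 0 hok0, hE0,
        add_zero, hcoeff0, hp_mem a.2]
  · -- comultiplicativity
    refine hspan (fun g => (ψ g).map (ψ : G →+* G[X])
        = (ψ g).eval₂ ((C : G[X] →+* G[X][X]).comp (C : G →+* G[X])) (C X + X)) ?_ ?_ ?_
    · show (ψ 0).map (ψ : G →+* G[X]) = _
      rw [hψ_apply, map_zero, Polynomial.map_zero, eval₂_zero]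
    · intro u v hu hv
      show (ψ (u + v)).map (ψ : G →+* G[X]) = _
      rw [map_add, Polynomial.map_add, eval₂_add, hu, hv]
    · intro n a
      show (ψ (π n a)).map (ψ : G →+* G[X]) = _
      ext i j
      rw [coeff_map, coeff_coeff_eval₂]
      have h1 : (ψ (π n a)).coeff i = t n a.1 i := by
        rw [hψ_apply, hψ₀, hL_coeff]
      have h2 : (ψ (π n a)).coeff (i + j) = t n a.1 (i + j) := by
        rw [hψ_apply, hψ₀, hL_coeff]
      rw [h1, h2]
      exact hB n a.1 a.2 i j
  · -- non-triviality
    obtain ⟨γ, hγΓ, hγ0, i, hi0, hci, heq⟩ := he_attain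
    have hcok : ok i := ⟨dg ((φ γ).coeff i) - dg γ, by push_cast; linarith⟩
    have hE : E i = dg ((φ γ).coeff i) - dg γ := by
      have h := hokE i hcok
      have : ((E i : ℤ) : ℚ) = ((dg ((φ γ).coeff i) - dg γ : ℤ) : ℚ) := by
        rw [h]; push_cast; linarith
      exact_mod_cast this
    intro htop
    have hmem : π (dg γ) ⟨γ, (hdg γ hγ0).1⟩ ∈ expInv ψ := by
      rw [htop]; exact Algebra.mem_top
    have hCg : ψ (π (dg γ) ⟨γ, (hdg γ hγ0).1⟩) = C (π (dg γ) ⟨γ, (hdg γ hγ0).1⟩) := hmem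
    have hg : (ψ (π (dg γ) ⟨γ, (hdg γ hγ0).1⟩)).coeff i = p (dg ((φ γ).coeff i)) ((φ γ).coeff i) := by
      rw [hψ_apply, hψ₀, hL_coeff, ht_ok _ _ i hcok,
        show dg γ + E i = dg ((φ γ).coeff i) by omega]
    rw [hCg, coeff_C, if_neg hi0] at hg
    exact hp_ne (hdg _ hci).1 (hdg _ hci).2 hg.symm
  · -- invariants are preserved
    intro a n h hnot hainv
    have hCa : φ a = C a := hainv
    show ψ (π n ⟨a, h⟩) = C (π n ⟨a, h⟩)
    rw [hψ_apply, hψ₀ n ⟨a, h⟩]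
    ext i
    rw [hL_coeff, coeff_C]
    rcases Nat.eq_zero_or_pos i with hi | hi
    · subst hi
      rw [ht_ok _ _ 0 hok0, hE0, add_zero, hcoeff0, hp_mem h, if_pos rfl]
    · rw [ht_zero n a i (by rw [hCa, coeff_C, if_neg (by omega)]), if_neg (by omega)]
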